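/- If an infinite-dimensional Banach space X admits an inevitable biorthogonal system with constant δ for every 0 < δ < 1/2, then X is arbitrarily distortable. -/

import Mathlib

noncomputable section

/-- A subset `A` of (the unit sphere of) `X` is inevitable: every
infinite-dimensional closed subspace of `X` comes arbitrarily close to `A`. -/
def Inevitable {X : Type*} [NormedAddCommGroup X] [NormedSpace ℂ X] (A : Set X) : Prop :=
  ∀ H : Submodule ℂ X, IsClosed (H : Set X) → ¬ FiniteDimensional ℂ H →
    ∀ ε : ℝ, 0 < ε → ∃ h ∈ H, ∃ a ∈ A, ‖h - a‖ < ε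

/-- `X` admits an inevitable biorthogonal system with constant `δ`. -/
def InevitableBiorthSystem (X : Type*) [NormedAddCommGroup X] [NormedSpace ℂ X]
    (δ : ℝ) : Prop :=
  ∃ (A : ℕ → Set X) (B : ℕ → Set (X →L[ℂ] ℂ)),
    (∀ j, A j ⊆ Metric.sphere (0 : X) 1) ∧
    (∀ j, B j ⊆ Metric.closedBall (0 : X →L[ℂ] ℂ) 1) ∧
    (∀ j, Inevitable (A j)) ∧
    (∀ j, ∀ x ∈ A j, ∃ f ∈ B j, 1 - δ ≤ (f x).re) ∧
    (∀ j k, j ≠ k → ∀ x ∈ A j, ∀ f ∈ B k, ‖f x‖ ≤ δ)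

/-- `N : X → ℝ` is a norm on the complex normed space `X`. -/
def IsNormOn {X : Type*} [NormedAddCommGroup X] [NormedSpace ℂ X] (N : X → ℝ) : Prop :=
  (∀ x, 0 ≤ N x) ∧ (∀ x, N x = 0 → x = 0) ∧
  (∀ (c : ℂ) (x : X), N (c • x) = ‖c‖ * N x) ∧
  (∀ x y, N (x + y) ≤ N x + N y)

/-- The norm of `X` is `lam`-distortable: there is an equivalent norm `N` such
that on the unit sphere of every infinite-dimensional closed subspace `Y`,
`sup N x / N y ≥ lam`. -/
def Distortable (X : Type*) [NormedAddCommGroup X] [NormedSpace ℂ X] (lam : ℝ) : Prop :=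
  ∃ N : X → ℝ, IsNormOn N ∧
    (∃ c > (0 : ℝ), ∃ C > (0 : ℝ), ∀ x, c * ‖x‖ ≤ N x ∧ N x ≤ C * ‖x‖) ∧
    ∀ Y : Submodule ℂ X, IsClosed (Y : Set X) → ¬ FiniteDimensional ℂ Y →
      lam ≤ sSup {r : ℝ | ∃ x ∈ Y, ∃ y ∈ Y, ‖x‖ = 1 ∧ ‖y‖ = 1 ∧ r = N x / N y}

/-- `X` is arbitrarily distortable. -/
def ArbitrarilyDistortable (X : Type*) [NormedAddCommGroup X] [NormedSpace ℂ X] : Prop :=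
  ∀ lam : ℝ, 1 < lam → Distortable X lam

namespace AuxDistort

variable {X : Type*} [NormedAddCommGroup X] [NormedSpace ℂ X]

def S (B : Set (X →L[ℂ] ℂ)) (x : X) : ℝ :=
  sSup ((fun f => ‖f x‖) '' B)

lemma S_ub {B : Set (X →L[ℂ] ℂ)} (hB : B ⊆ Metric.closedBall 0 1) (x : X) :
    ∀ r ∈ (fun f => ‖f x‖) '' B, r ≤ ‖x‖ := by
  rintro r ⟨f, hf, rfl⟩
  have h1 : ‖f‖ ≤ 1 := by
    simpa [Metric.mem_closedBall, dist_zero_right] using hB hf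
  calc ‖f x‖ = ‖f x‖ := rfl
    _ ≤ ‖f‖ * ‖x‖ := f.le_opNorm x
    _ ≤ 1 * ‖x‖ := by gcongr
    _ = ‖x‖ := one_mul _

lemma S_bdd {B : Set (X →L[ℂ] ℂ)} (hB : B ⊆ Metric.closedBall 0 1) (x : X) :
    BddAbove ((fun f => ‖f x‖) '' B) :=
  ⟨‖x‖, fun r hr => S_ub hB x r hr⟩

lemma S_nonneg (B : Set (X →L[ℂ] ℂ)) (x : X) : 0 ≤ S B x := by
  apply Real.sSup_nonneg
  rintro r ⟨f, hf, rfl⟩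
  exact norm_nonneg _

lemma S_le_norm {B : Set (X →L[ℂ] ℂ)} (hB : B ⊆ Metric.closedBall 0 1) (x : X) :
    S B x ≤ ‖x‖ :=
  Real.sSup_le (S_ub hB x) (norm_nonneg x)

lemma le_S {B : Set (X →L[ℂ] ℂ)} (hB : B ⊆ Metric.closedBall 0 1) {f : X →L[ℂ] ℂ}
    (hf : f ∈ B) (x : X) : ‖f x‖ ≤ S B x :=
  le_csSup (S_bdd hB x) ⟨f, hf, rfl⟩

lemma S_add {B : Set (X →L[ℂ] ℂ)} (hB : B ⊆ Metric.closedBall 0 1) (x y : X) :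
    S B (x + y) ≤ S B x + S B y := by
  apply Real.sSup_le
  · rintro r ⟨f, hf, rfl⟩
    have : f (x + y) = f x + f y := map_add f x y
    show ‖f (x + y)‖ ≤ _
    calc ‖f (x + y)‖ ≤ ‖f x‖ + ‖f y‖ := by
          rw [this]; exact norm_add_le _ _
      _ ≤ S B x + S B y := add_le_add (le_S hB hf x) (le_S hB hf y)
  · exact add_nonneg (S_nonneg B x) (S_nonneg B y)

lemma S_smul_le {B : Set (X →L[ℂ] ℂ)} (hB : B ⊆ Metric.closedBall 0 1) (c : ℂ) (x : X) :
    S B (c • x) ≤ ‖c‖ * S B x := by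
  apply Real.sSup_le
  · rintro r ⟨f, hf, rfl⟩
    show ‖f (c • x)‖ ≤ _
    have h1 : f (c • x) = c * f x := by simp
    rw [h1, norm_mul]
    exact mul_le_mul_of_nonneg_left (le_S hB hf x) (norm_nonneg _)
  · exact mul_nonneg (norm_nonneg _) (S_nonneg B x)

lemma S_smul {B : Set (X →L[ℂ] ℂ)} (hB : B ⊆ Metric.closedBall 0 1) (c : ℂ) (x : X) :
    S B (c • x) = ‖c‖ * S B x := by
  rcases eq_or_ne c 0 with rfl | hc
  · have h0 : S B (0 : X) = 0 :=
      le_antisymm (by simpa using S_le_norm hB 0) (S_nonneg B 0)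
    simp [h0]
  · refine le_antisymm (S_smul_le hB c x) ?_
    have key := S_smul_le hB c⁻¹ (c • x)
    rw [smul_smul, inv_mul_cancel₀ hc, one_smul, norm_inv] at key
    have hcpos : 0 < ‖c‖ := norm_pos_iff.mpr hc
    calc ‖c‖ * S B x
        ≤ ‖c‖ * ((‖c‖)⁻¹ * S B (c • x)) := by
          exact mul_le_mul_of_nonneg_left key hcpos.le
      _ = S B (c • x) := by field_simp

end AuxDistort

namespace AuxDistort

variable {X : Type*} [NormedAddCommGroup X] [NormedSpace ℂ X]

def NN (B : Set (X →L[ℂ] ℂ)) (M : ℝ) (x : X) : ℝ := ‖x‖ + M * S B x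

lemma NN_nonneg (B : Set (X →L[ℂ] ℂ)) {M : ℝ} (hM : 0 ≤ M) (x : X) : 0 ≤ NN B M x :=
  add_nonneg (norm_nonneg x) (mul_nonneg hM (S_nonneg B x))

lemma norm_le_NN (B : Set (X →L[ℂ] ℂ)) {M : ℝ} (hM : 0 ≤ M) (x : X) : ‖x‖ ≤ NN B M x := by
  have := mul_nonneg hM (S_nonneg B x)
  unfold NN; linarith

lemma NN_le {B : Set (X →L[ℂ] ℂ)} (hB : B ⊆ Metric.closedBall 0 1) {M : ℝ} (hM : 0 ≤ M)
    (x : X) : NN B M x ≤ (1 + M) * ‖x‖ := by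
  have h1 : M * S B x ≤ M * ‖x‖ := mul_le_mul_of_nonneg_left (S_le_norm hB x) hM
  unfold NN; nlinarith [norm_nonneg x]

lemma NN_smul {B : Set (X →L[ℂ] ℂ)} (hB : B ⊆ Metric.closedBall 0 1) (M : ℝ) (c : ℂ)
    (x : X) : NN B M (c • x) = ‖c‖ * NN B M x := by
  unfold NN
  rw [norm_smul, S_smul hB]
  ring

lemma NN_add {B : Set (X →L[ℂ] ℂ)} (hB : B ⊆ Metric.closedBall 0 1) {M : ℝ} (hM : 0 ≤ M)
    (x y : X) : NN B M (x + y) ≤ NN B M x + NN B M y := by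
  have h1 : M * S B (x + y) ≤ M * (S B x + S B y) :=
    mul_le_mul_of_nonneg_left (S_add hB x y) hM
  have h2 := norm_add_le x y
  unfold NN; nlinarith

lemma NN_lip {B : Set (X →L[ℂ] ℂ)} (hB : B ⊆ Metric.closedBall 0 1) {M : ℝ} (hM : 0 ≤ M)
    (u v : X) : NN B M u ≤ NN B M v + (1 + M) * ‖u - v‖ := by
  have h1 : NN B M u ≤ NN B M v + NN B M (u - v) := by
    have := NN_add hB hM v (u - v)
    simpa using this
  have h2 : NN B M (u - v) ≤ (1 + M) * ‖u - v‖ := NN_le hB hM (u - v)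
  linarith

end AuxDistort


set_option maxHeartbeats 1000000 in
/-- An infinite-dimensional Banach space admitting an inevitable
biorthogonal system with constant `δ` for every `0 < δ < 1/2` is arbitrarily
distortable. -/
theorem arbitrarilyDistortable_of_inevitableBiorthSystem
    (X : Type*) [NormedAddCommGroup X] [NormedSpace ℂ X] [CompleteSpace X]
    (hX : ¬ FiniteDimensional ℂ X)
    (h : ∀ δ : ℝ, 0 < δ → δ < 1 / 2 → InevitableBiorthSystem X δ) :
    ArbitrarilyDistortable X := by
  intro lam hlam
  have hlam0 : (0 : ℝ) < lam := lt_trans one_pos hlam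
  obtain ⟨δ, hδpos, hδhalf, hδ15, hδ4⟩ :
      ∃ δ : ℝ, 0 < δ ∧ δ < 1 / 2 ∧ δ ≤ 1 / (15 * lam) ∧ δ ≤ 1 / 4 := by
    refine ⟨min (1 / (15 * lam)) (1 / 4), lt_min (by positivity) (by norm_num),
      lt_of_le_of_lt (min_le_right _ _) (by norm_num), min_le_left _ _, min_le_right _ _⟩
  obtain ⟨A, B, hAs, hBb, hinev, hbio1, hbio2⟩ := h δ hδpos hδhalf
  obtain ⟨M, hMpos, hMδ, hM15, hM4⟩ :
      ∃ M : ℝ, 0 < M ∧ M * δ = 1 ∧ 15 * lam ≤ M ∧ 4 ≤ M := by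
    refine ⟨1 / δ, by positivity, by field_simp, ?_, ?_⟩
    · rw [le_div_iff₀ hδpos]
      rw [le_div_iff₀ (by positivity : (0:ℝ) < 15 * lam)] at hδ15
      linarith
    · rw [le_div_iff₀ hδpos]; linarith
  have hB0 : B 0 ⊆ Metric.closedBall 0 1 := hBb 0
  set N : X → ℝ := AuxDistort.NN (B 0) M with hNdef
  have hN_nonneg : ∀ x, 0 ≤ N x := AuxDistort.NN_nonneg (B 0) hMpos.le
  have hnorm_le_N : ∀ x, ‖x‖ ≤ N x := AuxDistort.norm_le_NN (B 0) hMpos.le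
  have hN_le : ∀ x, N x ≤ (1 + M) * ‖x‖ := AuxDistort.NN_le hB0 hMpos.le
  have hN_smul : ∀ (c : ℂ) (x : X), N (c • x) = ‖c‖ * N x :=
    AuxDistort.NN_smul hB0 M
  have hN_add : ∀ x y, N (x + y) ≤ N x + N y := AuxDistort.NN_add hB0 hMpos.le
  have hN_lip : ∀ u v : X, N u ≤ N v + (1 + M) * ‖u - v‖ := AuxDistort.NN_lip hB0 hMpos.le
  refine ⟨N, ⟨hN_nonneg, ?_, hN_smul, hN_add⟩, ⟨1, one_pos, 1 + M, by linarith, fun x =>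
    ⟨by simpa using hnorm_le_N x, hN_le x⟩⟩, ?_⟩
  · intro x hx
    have h1 := hnorm_le_N x
    rw [hx] at h1
    exact norm_eq_zero.mp (le_antisymm h1 (norm_nonneg x))
  intro Y hYc hYfd
  obtain ⟨ε, hεpos, hε2, hεM⟩ : ∃ ε : ℝ, 0 < ε ∧ ε ≤ 1 / 2 ∧ (1 + M) * ε ≤ 1 / 2 := by
    refine ⟨min (1 / 2) (1 / (2 * (1 + M))), lt_min (by norm_num) (by positivity),
      min_le_left _ _, ?_⟩
    have h1 : min (1 / 2) (1 / (2 * (1 + M))) ≤ 1 / (2 * (1 + M)) := min_le_right _ _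
    rw [le_div_iff₀ (by positivity : (0:ℝ) < 2 * (1 + M))] at h1
    nlinarith
  obtain ⟨h₁, hh₁Y, a, haA, hha⟩ := hinev 0 Y hYc hYfd ε hεpos
  obtain ⟨h₂, hh₂Y, b, hbA, hhb⟩ := hinev 1 Y hYc hYfd ε hεpos
  have hanorm : ‖a‖ = 1 := by
    have := hAs 0 haA
    simpa using mem_sphere_zero_iff_norm.mp this
  have hbnorm : ‖b‖ = 1 := by
    have := hAs 1 hbA
    simpa using mem_sphere_zero_iff_norm.mp this
  have hha' : ‖h₁ - a‖ ≤ ε := hha.le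
  have hhb' : ‖h₂ - b‖ ≤ ε := hhb.le
  have hn1lb : 1 - ε ≤ ‖h₁‖ := by
    have h1 := norm_sub_norm_le a h₁
    rw [hanorm, norm_sub_rev a h₁] at h1
    linarith
  have hn1ub : ‖h₁‖ ≤ 1 + ε := by
    have h1 := norm_sub_norm_le h₁ a
    rw [hanorm] at h1
    linarith
  have hn2lb : 1 - ε ≤ ‖h₂‖ := by
    have h1 := norm_sub_norm_le b h₂
    rw [hbnorm, norm_sub_rev b h₂] at h1
    linarith
  have hn2ub : ‖h₂‖ ≤ 1 + ε := by
    have h1 := norm_sub_norm_le h₂ b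
    rw [hbnorm] at h1
    linarith
  have hn1pos : 0 < ‖h₁‖ := by linarith
  have hn2pos : 0 < ‖h₂‖ := by linarith
  have hSa : 1 - δ ≤ AuxDistort.S (B 0) a := by
    obtain ⟨f, hf, hfa⟩ := hbio1 0 a haA
    have h1 : (f a).re ≤ ‖f a‖ := Complex.re_le_norm _
    have h2 : ‖f a‖ ≤ AuxDistort.S (B 0) a := AuxDistort.le_S hB0 hf a
    linarith
  have hSb : AuxDistort.S (B 0) b ≤ δ := by
    apply Real.sSup_le
    · rintro r ⟨f, hf, rfl⟩
      exact hbio2 1 0 (by norm_num) b hbA f hf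
    · exact hδpos.le
  have hNa : M ≤ N a := by
    have h1 : M * (1 - δ) ≤ M * AuxDistort.S (B 0) a := mul_le_mul_of_nonneg_left hSa hMpos.le
    have h2 : M * (1 - δ) = M - 1 := by rw [mul_sub, hMδ, mul_one]
    have h3 : N a = ‖a‖ + M * AuxDistort.S (B 0) a := rfl
    rw [h3, hanorm]
    linarith
  have hNb : N b ≤ 2 := by
    have h1 : M * AuxDistort.S (B 0) b ≤ M * δ := mul_le_mul_of_nonneg_left hSb hMpos.le
    have h3 : N b = ‖b‖ + M * AuxDistort.S (B 0) b := rfl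
    rw [h3, hbnorm]
    linarith
  have hNh1 : M - 1 / 2 ≤ N h₁ := by
    have h1 := hN_lip a h₁
    rw [norm_sub_rev a h₁] at h1
    have h3 : (1 + M) * ‖h₁ - a‖ ≤ (1 + M) * ε :=
      mul_le_mul_of_nonneg_left hha' (by linarith)
    linarith
  have hNh2 : N h₂ ≤ 5 / 2 := by
    have h1 := hN_lip h₂ b
    have h3 : (1 + M) * ‖h₂ - b‖ ≤ (1 + M) * ε :=
      mul_le_mul_of_nonneg_left hhb' (by linarith)
    linarith
  set x : X := ((‖h₁‖⁻¹ : ℝ) : ℂ) • h₁ with hxdef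
  set y : X := ((‖h₂‖⁻¹ : ℝ) : ℂ) • h₂ with hydef
  have hxY : x ∈ Y := Y.smul_mem _ hh₁Y
  have hyY : y ∈ Y := Y.smul_mem _ hh₂Y
  have hxn : ‖x‖ = 1 := by
    rw [hxdef, norm_smul, Complex.norm_real, Real.norm_eq_abs,
      abs_of_nonneg (inv_nonneg.mpr (norm_nonneg h₁)), inv_mul_cancel₀ hn1pos.ne']
  have hyn : ‖y‖ = 1 := by
    rw [hydef, norm_smul, Complex.norm_real, Real.norm_eq_abs,
      abs_of_nonneg (inv_nonneg.mpr (norm_nonneg h₂)), inv_mul_cancel₀ hn2pos.ne']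
  have hNx : N x = ‖h₁‖⁻¹ * N h₁ := by
    rw [hxdef, hN_smul, Complex.norm_real, Real.norm_eq_abs, abs_of_nonneg (inv_nonneg.mpr (norm_nonneg h₁))]
  have hNy : N y = ‖h₂‖⁻¹ * N h₂ := by
    rw [hydef, hN_smul, Complex.norm_real, Real.norm_eq_abs, abs_of_nonneg (inv_nonneg.mpr (norm_nonneg h₂))]
  have hNxlb : (2 / 3) * (M - 1 / 2) ≤ N x := by
    rw [hNx]
    have hinv : (2 / 3 : ℝ) ≤ ‖h₁‖⁻¹ := by
      rw [le_inv_comm₀ (by norm_num) hn1pos]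
      norm_num
      linarith
    have hNh1pos : (0:ℝ) ≤ M - 1 / 2 := by linarith
    exact mul_le_mul hinv hNh1 hNh1pos (inv_nonneg.mpr (norm_nonneg h₁))
  have hNyub : N y ≤ 5 := by
    rw [hNy]
    have hinv : ‖h₂‖⁻¹ ≤ 2 := by
      rw [inv_le_comm₀ hn2pos (by norm_num)]
      linarith
    have hNh2pos : 0 ≤ N h₂ := hN_nonneg h₂
    calc ‖h₂‖⁻¹ * N h₂ ≤ 2 * (5 / 2) := mul_le_mul hinv hNh2 hNh2pos (by norm_num)
      _ = 5 := by norm_num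
  have hNypos : 0 < N y := by
    have := hnorm_le_N y
    rw [hyn] at this
    linarith
  have hratio : lam ≤ N x / N y := by
    rw [le_div_iff₀ hNypos]
    have h1 : lam * N y ≤ lam * 5 := mul_le_mul_of_nonneg_left hNyub hlam0.le
    linarith
  have hmem : N x / N y ∈ {r : ℝ | ∃ x ∈ Y, ∃ y ∈ Y, ‖x‖ = 1 ∧ ‖y‖ = 1 ∧ r = N x / N y} :=
    ⟨x, hxY, y, hyY, hxn, hyn, rfl⟩
  have hbddR : BddAbove {r : ℝ | ∃ x ∈ Y, ∃ y ∈ Y, ‖x‖ = 1 ∧ ‖y‖ = 1 ∧ r = N x / N y} := by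
    refine ⟨1 + M, ?_⟩
    rintro r ⟨u, -, v, -, hu, hv, rfl⟩
    have h1 : N u ≤ 1 + M := by
      have := hN_le u
      rw [hu] at this
      linarith
    have h2 : 1 ≤ N v := by
      have := hnorm_le_N v
      rw [hv] at this
      linarith
    calc N u / N v ≤ N u := div_le_self (hN_nonneg u) h2
      _ ≤ 1 + M := h1
  exact le_trans hratio (le_csSup hbddR hmem)
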